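/- Let G = (V, E) be a finite simple graph and let f : E → ℝ be nonnegative edge weights that are not identically zero. Define λ(f) as the supremum of the set of t ≥ 0 such that t·f satisfies the Edmonds matching-polytope constraints of G, and μ(f) as the supremum of the set of t ≥ 0 such that t·f satisfies the fractional matching constraints of G. Then 1/μ(f) ≥ 1/λ(f) − max_{e ∈ E} f(e). -/

import Mathlib

open Finset

/-- `f` satisfies the Edmonds matching-polytope constraints of `G`. -/
def EdmondsConstraints {V : Type*} [Fintype V] [DecidableEq V]
    (G : SimpleGraph V) [DecidableRel G.Adj] (f : Sym2 V → ℝ) : Prop :=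
  (∀ e ∈ G.edgeFinset, 0 ≤ f e) ∧
  (∀ v : V, ∑ e ∈ G.incidenceFinset v, f e ≤ 1) ∧
  (∀ U : Finset V, Odd U.card →
    ∑ e ∈ G.edgeFinset.filter (fun e => ∀ x ∈ e, x ∈ U), f e ≤ ((U.card / 2 : ℕ) : ℝ))

/-- `f` satisfies the fractional matching constraints of `G`. -/
def FractionalMatchingConstraints {V : Type*} [Fintype V] [DecidableEq V]
    (G : SimpleGraph V) [DecidableRel G.Adj] (f : Sym2 V → ℝ) : Prop :=
  (∀ e ∈ G.edgeFinset, 0 ≤ f e) ∧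
  (∀ v : V, ∑ e ∈ G.incidenceFinset v, f e ≤ 1)

private lemma card_filter_mem_sym2 {V : Type*} [DecidableEq V] (U : Finset V) (e : Sym2 V)
    (hd : ¬ e.IsDiag) (hU : ∀ x ∈ e, x ∈ U) :
    (U.filter (fun v => v ∈ e)).card = 2 := by
  revert hd hU
  induction e using Sym2.ind with
  | _ a b =>
    intro hd hU
    have hab : a ≠ b := by simpa using hd
    have hset : U.filter (fun v => v ∈ s(a, b)) = {a, b} := by
      ext x
      simp only [Finset.mem_filter, Sym2.mem_iff, Finset.mem_insert, Finset.mem_singleton]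
      constructor
      · exact fun h => h.2
      · rintro (rfl | rfl)
        · exact ⟨hU x (by simp), Or.inl rfl⟩
        · exact ⟨hU x (by simp), Or.inr rfl⟩
    rw [hset, Finset.card_pair hab]

private lemma mem_offDiag_image_sym2 {V : Type*} [DecidableEq V] (U : Finset V) (e : Sym2 V)
    (hd : ¬ e.IsDiag) (hU : ∀ x ∈ e, x ∈ U) : e ∈ U.offDiag.image Sym2.mk.uncurry := by
  revert hd hU
  induction e using Sym2.ind with
  | _ a b =>
    intro hd hU
    exact Finset.mem_image.2 ⟨(a, b),
      Finset.mem_offDiag.2 ⟨hU a (by simp), hU b (by simp), by simpa using hd⟩, rfl⟩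

private lemma edmonds_of_frac {V : Type*} [Fintype V] [DecidableEq V]
    (G : SimpleGraph V) [DecidableRel G.Adj] (f : Sym2 V → ℝ) (M t : ℝ)
    (h₀ : ∀ e ∈ G.edgeFinset, 0 ≤ f e) (hfM : ∀ e ∈ G.edgeFinset, f e ≤ M)
    (hM : 0 ≤ M) (ht : 0 ≤ t)
    (hB : FractionalMatchingConstraints G (fun e => t * f e)) :
    EdmondsConstraints G (fun e => t / (1 + t * M) * f e) := by
  obtain ⟨hB1, hB2⟩ := hB
  have hm0 : 0 ≤ t * M := mul_nonneg ht hM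
  have hden : (0:ℝ) < 1 + t * M := by linarith
  have hs0 : 0 ≤ t / (1 + t * M) := div_nonneg ht hden.le
  have hst : t / (1 + t * M) ≤ t := by
    rw [div_le_iff₀ hden]; nlinarith
  refine ⟨fun e he => mul_nonneg hs0 (h₀ e he), fun v => ?_, fun U hU => ?_⟩
  · refine le_trans (Finset.sum_le_sum fun e he => ?_) (hB2 v)
    have he' : e ∈ G.edgeFinset := by
      rw [SimpleGraph.mem_incidenceFinset] at he
      exact SimpleGraph.mem_edgeFinset.2 he.1
    exact mul_le_mul_of_nonneg_right hst (h₀ e he')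
  · obtain ⟨k, hk0⟩ := hU
    have hk : U.card = 2 * k + 1 := by omega
    set EU := G.edgeFinset.filter (fun e => ∀ x ∈ e, x ∈ U) with hEUdef
    have hEUedge : ∀ e ∈ EU, e ∈ G.edgeFinset := fun e he => (Finset.mem_filter.1 he).1
    have hEUin : ∀ e ∈ EU, ∀ x ∈ e, x ∈ U := fun e he => (Finset.mem_filter.1 he).2
    have hEUnd : ∀ e ∈ EU, ¬ e.IsDiag := fun e he =>
      G.not_isDiag_of_mem_edgeSet (SimpleGraph.mem_edgeFinset.1 (hEUedge e he))
    -- double counting : 2 * X ≤ |U|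
    have hswap : ∑ e ∈ EU, 2 * (t * f e) ≤ (U.card : ℝ) := by
      calc ∑ e ∈ EU, 2 * (t * f e)
          = ∑ v ∈ U, ∑ e ∈ EU, (if v ∈ e then t * f e else 0) := by
            rw [Finset.sum_comm]
            refine Finset.sum_congr rfl fun e he => ?_
            rw [← Finset.sum_filter, Finset.sum_const,
              card_filter_mem_sym2 U e (hEUnd e he) (hEUin e he), nsmul_eq_mul]
            norm_num
        _ ≤ ∑ v ∈ U, (1:ℝ) := by
            refine Finset.sum_le_sum fun v _ => ?_
            rw [← Finset.sum_filter]
            refine le_trans (Finset.sum_le_sum_of_subset_of_nonneg ?_ ?_) (hB2 v)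
            · intro e he
              obtain ⟨heEU, hve⟩ := Finset.mem_filter.1 he
              rw [SimpleGraph.mem_incidenceFinset]
              exact ⟨SimpleGraph.mem_edgeFinset.1 (hEUedge e heEU), hve⟩
            · intro e he _
              have he' : e ∈ G.edgeFinset := by
                rw [SimpleGraph.mem_incidenceFinset] at he
                exact SimpleGraph.mem_edgeFinset.2 he.1
              exact mul_nonneg ht (h₀ e he')
        _ = (U.card : ℝ) := by simp
    -- edge count : |EU| ≤ k (2k+1)
    have hNk : (EU.card : ℝ) ≤ (k : ℝ) * (2 * (k : ℝ) + 1) := by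
      have h1 : EU.card ≤ (U.offDiag.image Sym2.mk.uncurry).card :=
        Finset.card_le_card fun e he => mem_offDiag_image_sym2 U e (hEUnd e he) (hEUin e he)
      rw [Sym2.card_image_offDiag, hk] at h1
      have hchoose : (2 * k + 1).choose 2 = k * (2 * k + 1) := by
        rw [Nat.choose_two_right, Nat.add_sub_cancel, Nat.mul_comm (2 * k + 1) (2 * k),
          Nat.mul_assoc, Nat.mul_div_cancel_left _ (by norm_num)]
      rw [hchoose] at h1
      calc (EU.card : ℝ) ≤ ((k * (2 * k + 1) : ℕ) : ℝ) := by exact_mod_cast h1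
        _ = (k : ℝ) * (2 * (k : ℝ) + 1) := by push_cast; ring
    have hXM : ∑ e ∈ EU, t * f e ≤ (EU.card : ℝ) * (t * M) := by
      calc ∑ e ∈ EU, t * f e ≤ ∑ e ∈ EU, t * M :=
            Finset.sum_le_sum fun e he =>
              mul_le_mul_of_nonneg_left (hfM e (hEUedge e he)) ht
        _ = (EU.card : ℝ) * (t * M) := by rw [Finset.sum_const, nsmul_eq_mul]
    have hd1 : 2 * ∑ e ∈ EU, t * f e ≤ 2 * (k : ℝ) + 1 := by
      rw [Finset.mul_sum]
      calc ∑ e ∈ EU, 2 * (t * f e) ≤ (U.card : ℝ) := hswap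
        _ = 2 * (k : ℝ) + 1 := by rw [hk]; push_cast; ring
    have hgoal : ∑ e ∈ EU, t * f e ≤ (k : ℝ) * (1 + t * M) := by
      have hNm : (EU.card : ℝ) * (t * M) ≤ ((k : ℝ) * (2 * (k : ℝ) + 1)) * (t * M) :=
        mul_le_mul_of_nonneg_right hNk hm0
      rcases le_or_gt 1 (2 * (k : ℝ) * (t * M)) with h | h
      · nlinarith
      · have hk0' : (0:ℝ) ≤ (k : ℝ) := Nat.cast_nonneg k
        nlinarith [mul_nonneg hk0' (by linarith : (0:ℝ) ≤ 1 - 2 * (k : ℝ) * (t * M))]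
    have hcast : ((U.card / 2 : ℕ) : ℝ) = (k : ℝ) := by
      have : U.card / 2 = k := by omega
      rw [this]
    rw [hcast]
    have hrw : ∑ e ∈ EU, t / (1 + t * M) * f e = (∑ e ∈ EU, t * f e) / (1 + t * M) := by
      rw [Finset.sum_div]
      exact Finset.sum_congr rfl fun e _ => by ring
    rw [hrw, div_le_iff₀ hden]
    linarith

/-- For nonnegative, not identically zero edge weights `f`, the flow extension
ratio `λ(f)` and approximate flow extension ratio `μ(f)` satisfy
`1/μ(f) ≥ 1/λ(f) − max_{e ∈ E} f(e)`. -/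
theorem flow_extension_ratio_reciprocal_bound
    {V : Type*} [Fintype V] [DecidableEq V]
    (G : SimpleGraph V) [DecidableRel G.Adj] (f : Sym2 V → ℝ)
    (h₀ : ∀ e ∈ G.edgeFinset, 0 ≤ f e)
    (hne : ∃ e ∈ G.edgeFinset, f e ≠ 0) :
    1 / sSup {t : ℝ | 0 ≤ t ∧ FractionalMatchingConstraints G (fun e => t * f e)}
      ≥ 1 / sSup {t : ℝ | 0 ≤ t ∧ EdmondsConstraints G (fun e => t * f e)}
        - G.edgeFinset.sup' (hne.imp fun _ he => he.1) f := by
  classical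
  have hne' := hne
  obtain ⟨e₀, he₀, hfe₀⟩ := hne'
  have hf₀ : 0 < f e₀ := (h₀ e₀ he₀).lt_of_ne (Ne.symm hfe₀)
  set M := G.edgeFinset.sup' (hne.imp fun _ he => he.1) f with hMdef
  have hfM : ∀ e ∈ G.edgeFinset, f e ≤ M := fun e he => Finset.le_sup' f he
  have hM0 : 0 < M := lt_of_lt_of_le hf₀ (hfM e₀ he₀)
  set A := {t : ℝ | 0 ≤ t ∧ EdmondsConstraints G (fun e => t * f e)} with hAdef
  set B := {t : ℝ | 0 ≤ t ∧ FractionalMatchingConstraints G (fun e => t * f e)} with hBdef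
  -- 0 ∈ B
  have h0B : (0:ℝ) ∈ B := by
    refine ⟨le_refl 0, fun e _ => by simp, fun v => by simp⟩
  -- upper bound for B
  have hub : ∀ t ∈ B, t ≤ 1 / f e₀ := by
    rintro t ⟨ht0, _, h2⟩
    obtain ⟨⟨a, b⟩, rfl⟩ := Quot.exists_rep e₀
    have hinc : s(a, b) ∈ G.incidenceFinset a := by
      rw [SimpleGraph.mem_incidenceFinset]
      exact ⟨SimpleGraph.mem_edgeFinset.1 he₀, by exact Sym2.mem_mk_left a b⟩
    have hone : t * f s(a, b) ≤ 1 := by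
      refine le_trans (Finset.single_le_sum (f := fun e => t * f e) ?_ hinc) (h2 a)
      intro e he
      have he' : e ∈ G.edgeFinset := by
        rw [SimpleGraph.mem_incidenceFinset] at he
        exact SimpleGraph.mem_edgeFinset.2 he.1
      exact mul_nonneg ht0 (h₀ e he')
    rw [le_div_iff₀ hf₀]
    exact hone
  have hBbdd : BddAbove B := ⟨1 / f e₀, hub⟩
  -- a positive element of B
  have hT : 0 < ∑ e ∈ G.edgeFinset, f e := Finset.sum_pos' h₀ ⟨e₀, he₀, hf₀⟩
  have hTB : (∑ e ∈ G.edgeFinset, f e)⁻¹ ∈ B := by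
    refine ⟨by positivity, fun e he => mul_nonneg (by positivity) (h₀ e he), fun v => ?_⟩
    rw [← Finset.mul_sum]
    have hsub : ∑ e ∈ G.incidenceFinset v, f e ≤ ∑ e ∈ G.edgeFinset, f e := by
      refine Finset.sum_le_sum_of_subset_of_nonneg ?_ (fun e he _ => h₀ e he)
      intro e he
      rw [SimpleGraph.mem_incidenceFinset] at he
      exact SimpleGraph.mem_edgeFinset.2 he.1
    calc (∑ e ∈ G.edgeFinset, f e)⁻¹ * ∑ e ∈ G.incidenceFinset v, f e
        ≤ (∑ e ∈ G.edgeFinset, f e)⁻¹ * ∑ e ∈ G.edgeFinset, f e := by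
          refine mul_le_mul_of_nonneg_left hsub (by positivity)
      _ = 1 := inv_mul_cancel₀ hT.ne'
  have hμpos : 0 < sSup B := lt_of_lt_of_le (by positivity) (le_csSup hBbdd hTB)
  -- sSup B ∈ B
  have hμB : sSup B ∈ B := by
    refine ⟨hμpos.le, fun e he => mul_nonneg hμpos.le (h₀ e he), fun v => ?_⟩
    rw [← Finset.mul_sum]
    have hSv0 : 0 ≤ ∑ e ∈ G.incidenceFinset v, f e := by
      refine Finset.sum_nonneg fun e he => ?_
      rw [SimpleGraph.mem_incidenceFinset] at he
      exact h₀ e (SimpleGraph.mem_edgeFinset.2 he.1)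
    rcases hSv0.eq_or_lt with hSv | hSv
    · rw [← hSv, mul_zero]; norm_num
    · have hup : ∀ t ∈ B, t ≤ 1 / ∑ e ∈ G.incidenceFinset v, f e := by
        rintro t ⟨ht0, _, h2⟩
        rw [le_div_iff₀ hSv]
        exact le_trans (le_of_eq (Finset.mul_sum _ _ _)) (h2 v)
      have := csSup_le ⟨0, h0B⟩ hup
      calc sSup B * ∑ e ∈ G.incidenceFinset v, f e
          ≤ (1 / ∑ e ∈ G.incidenceFinset v, f e) * ∑ e ∈ G.incidenceFinset v, f e :=
            mul_le_mul_of_nonneg_right this hSv0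
        _ = 1 := by field_simp
  -- key step
  have hkey : sSup B / (1 + sSup B * M) ∈ A := by
    refine ⟨div_nonneg hμpos.le (by nlinarith), ?_⟩
    exact edmonds_of_frac G f M (sSup B) h₀ hfM hM0.le hμpos.le hμB.2
  have hAbdd : BddAbove A := ⟨1 / f e₀, fun t ht => hub t ⟨ht.1, ht.2.1, ht.2.2.1⟩⟩
  have hlam : sSup B / (1 + sSup B * M) ≤ sSup A := le_csSup hAbdd hkey
  have hden : (0:ℝ) < 1 + sSup B * M := by nlinarith
  have hspos : 0 < sSup B / (1 + sSup B * M) := div_pos hμpos hden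
  have h1 : 1 / sSup A ≤ 1 / (sSup B / (1 + sSup B * M)) :=
    one_div_le_one_div_of_le hspos hlam
  have h2 : 1 / (sSup B / (1 + sSup B * M)) = 1 / sSup B + M := by
    rw [one_div_div]
    field_simp
  rw [ge_iff_le]
  rw [h2] at h1
  linarith
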